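/- arXiv:2512.00393 — 5 statements merged into one kernel-verified Lean document; each statement's English description precedes it below -/
import Mathlib

section
/- Let A, B, K, L, C be real matrices as in the separation principle setup. The spectrum of the block matrix [[A, BK], [-LC, A+BK+LC]] equals the union (with multiplicity) of the spectra of A+BK and A+LC. In particular, every eigenvalue of the closed-loop matrix has negative real part if and only if every eigenvalue of A+BK and every eigenvalue of A+LC has negative real part. -/
open Matrix

open Polynomial in
lemma charpoly_conj_self {R : Type*} [CommRing R] {k : Type*} [Fintype k] [DecidableEq k]
    (P N : Matrix k k R) (h : P * P = 1) : (P * N * P).charpoly = N.charpoly := by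
  have hP : (P.map (C : R →+* R[X])) * (P.map C) = 1 := by
    rw [← Matrix.map_mul, h, Matrix.map_one _ (map_zero C) (map_one C)]
  have hcm : charmatrix (P * N * P) = (P.map C) * charmatrix N * (P.map C) := by
    unfold charmatrix
    have hsc : Commute (Matrix.scalar k (X : R[X])) (P.map C) :=
      (scalar_commute _ (fun r' => Commute.all _ _) _)
    rw [mul_sub, sub_mul, RingHom.mapMatrix_apply, RingHom.mapMatrix_apply,
      Matrix.map_mul, Matrix.map_mul]
    congr 1
    rw [← hsc.eq, mul_assoc, hP, mul_one]
  rw [Matrix.charpoly, Matrix.charpoly, hcm, det_mul, det_mul]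
  have : (P.map (C : R →+* R[X])).det * (P.map C).det = 1 := by
    rw [← det_mul, hP, det_one]
  calc (P.map (C : R →+* R[X])).det * (charmatrix N).det * (P.map C).det
      = (P.map C).det * (P.map C).det * (charmatrix N).det := by ring
    _ = (charmatrix N).det := by rw [this, one_mul]

open Polynomial in
lemma mem_spectrum_iff_root {k : Type*} [Fintype k] [DecidableEq k]
    (N : Matrix k k ℂ) (μ : ℂ) : μ ∈ spectrum ℂ N ↔ N.charpoly.IsRoot μ := by
  rw [spectrum.mem_iff, Matrix.isUnit_iff_isUnit_det, isUnit_iff_ne_zero, not_not]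
  have : N.charpoly.eval μ = (algebraMap ℂ (Matrix k k ℂ) μ - N).det := by
    rw [Matrix.charpoly, _root_.eval_det, matPolyEquiv_charmatrix]
    simp [Matrix.algebraMap_eq_diagonal, Matrix.scalar]
  rw [Polynomial.IsRoot, this]

/-- Separation principle, spectral version: the characteristic polynomial of the
closed-loop matrix `[[A, BK], [-LC, A+BK+LC]]` factors as the product of those of
`A+BK` and `A+LC` (spectrum equality with multiplicity), and hence all its complex
eigenvalues have negative real part iff all eigenvalues of `A+BK` and of `A+LC` do. -/
theorem stmt_1 {n m p : ℕ}
    (A : Matrix (Fin n) (Fin n) ℝ) (B : Matrix (Fin n) (Fin m) ℝ)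
    (K : Matrix (Fin m) (Fin n) ℝ) (L : Matrix (Fin n) (Fin p) ℝ)
    (C : Matrix (Fin p) (Fin n) ℝ)
    (M : Matrix (Fin n ⊕ Fin n) (Fin n ⊕ Fin n) ℝ)
    (hM : M = fromBlocks A (B * K) (-(L * C)) (A + B * K + L * C)) :
    M.charpoly = (A + B * K).charpoly * (A + L * C).charpoly ∧
    ((∀ μ ∈ spectrum ℂ (M.map (algebraMap ℝ ℂ)), μ.re < 0) ↔
      ((∀ μ ∈ spectrum ℂ ((A + B * K).map (algebraMap ℝ ℂ)), μ.re < 0) ∧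
       (∀ μ ∈ spectrum ℂ ((A + L * C).map (algebraMap ℝ ℂ)), μ.re < 0))) := by
  set P : Matrix (Fin n ⊕ Fin n) (Fin n ⊕ Fin n) ℝ := fromBlocks 1 0 1 (-1) with hP
  have hPP : P * P = 1 := by
    rw [hP, fromBlocks_multiply, ← fromBlocks_one]
    norm_num
  have key : P * M * P = fromBlocks (A + B * K) (-(B * K)) 0 (A + L * C) := by
    rw [hM, hP, fromBlocks_multiply, fromBlocks_multiply]
    congr 1 <;> noncomm_ring
  have h1 : M.charpoly = (A + B * K).charpoly * (A + L * C).charpoly := by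
    rw [← charpoly_conj_self P M hPP, key, Matrix.charpoly_fromBlocks_zero₂₁]
  refine ⟨h1, ?_⟩
  have hroot : ∀ μ : ℂ, μ ∈ spectrum ℂ (M.map (algebraMap ℝ ℂ)) ↔
      (μ ∈ spectrum ℂ ((A + B * K).map (algebraMap ℝ ℂ)) ∨
       μ ∈ spectrum ℂ ((A + L * C).map (algebraMap ℝ ℂ))) := by
    intro μ
    rw [mem_spectrum_iff_root, mem_spectrum_iff_root, mem_spectrum_iff_root,
      Matrix.charpoly_map, Matrix.charpoly_map, Matrix.charpoly_map, h1, Polynomial.map_mul]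
    simp only [Polynomial.IsRoot, Polynomial.eval_mul, mul_eq_zero]
  constructor
  · intro h
    exact ⟨fun μ hμ => h μ ((hroot μ).2 (Or.inl hμ)),
           fun μ hμ => h μ ((hroot μ).2 (Or.inr hμ))⟩
  · rintro ⟨ha, hb⟩ μ hμ
    rcases (hroot μ).1 hμ with h | h
    exacts [ha μ h, hb μ h]
end

section
/- Let L ∈ ℝ^{N×N} be a symmetric positive semidefinite matrix whose kernel is spanned by the all-ones vector 1_N (e.g., the Laplacian of a connected undirected weighted graph). For i = 1,…,N let X_i ∈ ℝ^{n×q_i} satisfy X_iᵀX_i = I_{q_i}, and let D = diag(X_1,…,X_N) ∈ ℝ^{Nn×Σq_i}. Then the matrix Dᵀ(L ⊗ I_n)D is positive definite if and only if ⋂_{i=1}^N Im(X_i) = {0}. -/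
open Matrix Kronecker

/-- Lemma 1 of the paper: for `L` symmetric PSD with kernel spanned by the all-ones
vector (e.g. the Laplacian of a connected undirected graph) and `X i` with orthonormal
columns, the matrix `Dᵀ (L ⊗ Iₙ) D` with `D = diag(X₁,…,X_N)` is positive definite
iff the column spaces of the `X i` intersect trivially. -/
theorem stmt_2 {N n : ℕ} (hN : 0 < N) (q : Fin N → ℕ)
    (L : Matrix (Fin N) (Fin N) ℝ) (hLsymm : L.IsSymm) (hLpsd : L.PosSemidef)
    (hker : ∀ v : Fin N → ℝ, L.mulVec v = 0 ↔ ∃ c : ℝ, v = fun _ => c)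
    (X : (i : Fin N) → Matrix (Fin n) (Fin (q i)) ℝ)
    (hX : ∀ i, (X i)ᵀ * X i = 1)
    (D : Matrix (Fin N × Fin n) ((i : Fin N) × Fin (q i)) ℝ)
    (hD : ∀ (pr : Fin N × Fin n) (s : (i : Fin N) × Fin (q i)),
      D pr s = if h : s.1 = pr.1 then X pr.1 pr.2 (Fin.cast (congrArg q h) s.2) else 0) :
    (Dᵀ * (L ⊗ₖ (1 : Matrix (Fin n) (Fin n) ℝ)) * D).PosDef ↔
      (⋂ i, Set.range (X i).mulVec) = {0} := by
  classical
  set K : Matrix (Fin N × Fin n) (Fin N × Fin n) ℝ := L ⊗ₖ (1 : Matrix (Fin n) (Fin n) ℝ)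
    with hKdef
  -- mulVec formula for the Kronecker product with the identity
  have hKmul : ∀ z : Fin N × Fin n → ℝ,
      K *ᵥ z = fun p => L.mulVec (fun j => z (j, p.2)) p.1 := by
    intro z
    funext p
    simp only [hKdef, mulVec, dotProduct, Fintype.sum_prod_type, kroneckerMap_apply,
      one_apply, mul_ite, mul_one, mul_zero, ite_mul, zero_mul, Finset.sum_ite_eq,
      Finset.mem_univ, if_true]
  -- the Kronecker product is positive semidefinite
  have hKps : K.PosSemidef := by
    refine .of_dotProduct_mulVec_nonneg ?_ ?_
    · show Kᴴ = K
      ext p r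
      simp only [hKdef, conjTranspose_apply, kroneckerMap_apply, one_apply, star_trivial]
      have hL : L r.1 p.1 = L p.1 r.1 := by
        conv_lhs => rw [← hLsymm]
        rfl
      rw [hL]
      by_cases h : p.2 = r.2 <;> simp [h, eq_comm]
    · intro x
      have hform : star x ⬝ᵥ K *ᵥ x
          = ∑ a : Fin n, (fun j => x (j, a)) ⬝ᵥ L *ᵥ (fun j => x (j, a)) := by
        rw [hKmul]
        simp only [dotProduct, Fintype.sum_prod_type, mulVec, Pi.star_apply, star_trivial]
        rw [Finset.sum_comm]
      rw [hform]
      refine Finset.sum_nonneg fun a _ => ?_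
      simpa [star_trivial] using hLpsd.dotProduct_mulVec_nonneg (fun j => x (j, a))
  -- mulVec formula for the block-diagonal matrix D
  have hDmul : ∀ y : ((i : Fin N) × Fin (q i)) → ℝ,
      D *ᵥ y = fun p => (X p.1).mulVec (fun k => y ⟨p.1, k⟩) p.2 := by
    intro y
    funext p
    simp only [mulVec, dotProduct, hD]
    rw [← Finset.univ_sigma_univ, Finset.sum_sigma, Finset.sum_eq_single p.1]
    · simp
    · intro i _ hi
      simp [dif_neg hi]
    · simp
  have hMps : (Dᵀ * K * D).PosSemidef := by
    have h := hKps.conjTranspose_mul_mul_same D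
    rwa [conjTranspose_eq_transpose_of_trivial] at h
  constructor
  · -- PosDef → trivial intersection
    intro hPD
    refine Set.eq_singleton_iff_unique_mem.mpr ⟨?_, ?_⟩
    · exact Set.mem_iInter.mpr fun i => ⟨0, Matrix.mulVec_zero _⟩
    · intro w hw
      by_contra hwne
      have hu : ∀ i, ∃ u : Fin (q i) → ℝ, (X i).mulVec u = w := fun i =>
        Set.mem_iInter.mp hw i
      choose u hu using hu
      set y : ((i : Fin N) × Fin (q i)) → ℝ := fun s => u s.1 s.2 with hy
      have hz : D *ᵥ y = fun p => w p.2 := by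
        rw [hDmul]
        funext p
        exact congrFun (hu p.1) p.2
      have hKz : K *ᵥ (D *ᵥ y) = 0 := by
        rw [hz, hKmul]
        funext p
        have : L.mulVec (fun _ => w p.2) = 0 := (hker _).mpr ⟨w p.2, rfl⟩
        exact congrFun this p.1
      have hquad : star y ⬝ᵥ (Dᵀ * K * D) *ᵥ y = 0 := by
        rw [← Matrix.mulVec_mulVec, ← Matrix.mulVec_mulVec, hKz, Matrix.mulVec_zero,
          dotProduct_zero]
      have hyne : y ≠ 0 := by
        intro h0
        apply hwne
        have : u ⟨0, hN⟩ = 0 := by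
          funext k
          exact congrFun h0 ⟨⟨0, hN⟩, k⟩
        rw [← hu ⟨0, hN⟩, this, Matrix.mulVec_zero]
      exact absurd hquad (ne_of_gt (hPD.dotProduct_mulVec_pos hyne))
  · -- trivial intersection → PosDef
    intro hInt
    refine .of_dotProduct_mulVec_pos hMps.1 fun x hx => ?_
    rcases lt_or_eq_of_le (hMps.dotProduct_mulVec_nonneg x) with h | h
    · exact h
    exfalso
    apply hx
    -- from zero quadratic form, deduce x = 0
    have hdot : star (D *ᵥ x) ⬝ᵥ K *ᵥ (D *ᵥ x) = 0 := by
      have : star x ⬝ᵥ (Dᵀ * K * D) *ᵥ x = star (D *ᵥ x) ⬝ᵥ K *ᵥ (D *ᵥ x) := by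
        rw [← Matrix.mulVec_mulVec, ← Matrix.mulVec_mulVec, Matrix.dotProduct_mulVec,
          Matrix.vecMul_transpose]
        simp [star_trivial]
      rw [← this, ← h]
    have hKz : K *ᵥ (D *ᵥ x) = 0 := (hKps.dotProduct_mulVec_zero_iff _).mp hdot
    have hcol : ∀ a : Fin n, L.mulVec (fun j => (D *ᵥ x) (j, a)) = 0 := by
      intro a
      funext i
      have := congrFun hKz (i, a)
      rw [hKmul] at this
      exact this
    have hc : ∀ a : Fin n, ∃ c : ℝ, (fun j => (D *ᵥ x) (j, a)) = fun _ => c := fun a =>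
      (hker _).mp (hcol a)
    choose c hc using hc
    have hXw : ∀ i, (X i).mulVec (fun k => x ⟨i, k⟩) = c := by
      intro i
      funext a
      have h1 := congrFun (hc a) i
      rw [hDmul] at h1
      exact h1
    have hcz : c = 0 := by
      have : c ∈ ⋂ i, Set.range (X i).mulVec :=
        Set.mem_iInter.mpr fun i => ⟨_, hXw i⟩
      rw [hInt] at this
      exact this
    funext s
    have hXz : (X s.1).mulVec (fun k => x ⟨s.1, k⟩) = 0 := by rw [hXw s.1, hcz]
    have : (fun k => x ⟨s.1, k⟩) = 0 := by
      have h2 : ((X s.1)ᵀ * X s.1) *ᵥ (fun k => x ⟨s.1, k⟩) = 0 := by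
        rw [← Matrix.mulVec_mulVec, hXz, Matrix.mulVec_zero]
      rwa [hX s.1, Matrix.one_mulVec] at h2
    exact congrFun this s.2
end

section
/- Let L ∈ ℝ^{N×N} be symmetric positive semidefinite with kernel spanned by 1_N, and let X_i ∈ ℝ^{n×q_i} with X_iᵀX_i = I_{q_i} for each i. If there exists a nonzero vector w ∈ ⋂_{i=1}^N Im(X_i), then Dᵀ(L ⊗ I_n)D is singular, where D = diag(X_1,…,X_N); specifically, the vector obtained by stacking the coordinate vectors c_i with X_i c_i = w lies in the kernel of Dᵀ(L ⊗ I_n)D. -/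
open Matrix Kronecker

/-- 'Only if' direction of Lemma 1: if a nonzero vector `w` lies in every column
space `Im(X i)` (say `X i (c i) = w`), then the stacked vector of the `c i` is a
nonzero kernel vector of `Dᵀ (L ⊗ Iₙ) D`, which is therefore singular. -/
theorem stmt_3 {N n : ℕ} (hN : 0 < N) (q : Fin N → ℕ)
    (L : Matrix (Fin N) (Fin N) ℝ) (hLsymm : L.IsSymm) (hLpsd : L.PosSemidef)
    (hker : ∀ v : Fin N → ℝ, L.mulVec v = 0 ↔ ∃ c : ℝ, v = fun _ => c)
    (X : (i : Fin N) → Matrix (Fin n) (Fin (q i)) ℝ)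
    (hX : ∀ i, (X i)ᵀ * X i = 1)
    (D : Matrix (Fin N × Fin n) ((i : Fin N) × Fin (q i)) ℝ)
    (hD : ∀ (pr : Fin N × Fin n) (s : (i : Fin N) × Fin (q i)),
      D pr s = if h : s.1 = pr.1 then X pr.1 pr.2 (Fin.cast (congrArg q h) s.2) else 0)
    (w : Fin n → ℝ) (hw : w ≠ 0)
    (c : (i : Fin N) → Fin (q i) → ℝ) (hc : ∀ i, (X i).mulVec (c i) = w)
    (v : ((i : Fin N) × Fin (q i)) → ℝ) (hv : ∀ s, v s = c s.1 s.2) :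
    v ≠ 0 ∧ (Dᵀ * (L ⊗ₖ (1 : Matrix (Fin n) (Fin n) ℝ)) * D).mulVec v = 0 := by
  constructor
  · intro h0
    apply hw
    have i : Fin N := ⟨0, hN⟩
    have hc0 : c i = 0 := by
      funext k
      have := hv ⟨i, k⟩
      rw [h0] at this
      exact this.symm
    rw [← hc i, hc0, Matrix.mulVec_zero]
  · have h1 : D.mulVec v = fun p : Fin N × Fin n => w p.2 := by
      funext p
      simp only [Matrix.mulVec, dotProduct]
      rw [← Finset.univ_sigma_univ, Finset.sum_sigma]
      have : ∀ j : Fin N, (∑ k : Fin (q j), D p ⟨j, k⟩ * v ⟨j, k⟩) =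
          if j = p.1 then ((X p.1).mulVec (c p.1)) p.2 else 0 := by
        intro j
        by_cases hj : j = p.1
        · subst hj
          simp only [if_pos rfl, Matrix.mulVec, dotProduct]
          refine Finset.sum_congr rfl fun k _ => ?_
          rw [hD, hv]
          simp
        · simp only [if_neg hj]
          refine Finset.sum_eq_zero fun k _ => ?_
          rw [hD]
          simp [hj]
      rw [Finset.sum_congr rfl fun j _ => this j]
      simp [hc p.1]
    have h2 : (L ⊗ₖ (1 : Matrix (Fin n) (Fin n) ℝ)).mulVec
        (fun p : Fin N × Fin n => w p.2) = 0 := by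
      funext p
      simp only [Matrix.mulVec, dotProduct, Matrix.kroneckerMap_apply,
        Pi.zero_apply]
      rw [Fintype.sum_prod_type]
      have hL0 : L.mulVec (fun _ => (1 : ℝ)) = 0 := (hker _).mpr ⟨1, rfl⟩
      have : ∀ j : Fin N, (∑ y : Fin n,
          L p.1 j * (1 : Matrix (Fin n) (Fin n) ℝ) p.2 y * w y) = L p.1 j * w p.2 := by
        intro j
        rw [Finset.sum_eq_single p.2]
        · simp
        · intro y _ hy
          simp [Matrix.one_apply, Ne.symm hy]
        · simp
      rw [Finset.sum_congr rfl fun j _ => this j, ← Finset.sum_mul]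
      have : (∑ j, L p.1 j) = L.mulVec (fun _ => (1 : ℝ)) p.1 := by
        simp [Matrix.mulVec, dotProduct]
      rw [this, hL0]
      simp
    rw [← Matrix.mulVec_mulVec, ← Matrix.mulVec_mulVec, h1, h2,
      Matrix.mulVec_zero]
end

section
/- Barbalat's lemma: If f : ℝ → ℝ is uniformly continuous on [0, ∞) and the limit lim_{t→∞} ∫₀ᵗ f(τ) dτ exists and is finite, then lim_{t→∞} f(t) = 0. -/
/-- Barbalat's lemma: if `f` is uniformly continuous on `[0, ∞)` and
`∫₀ᵗ f` converges to a finite limit as `t → ∞`, then `f(t) → 0`. -/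
theorem stmt_4 (f : ℝ → ℝ) (hf : UniformContinuousOn f (Set.Ici 0))
    (A : ℝ)
    (hint : Filter.Tendsto (fun t => ∫ τ in (0:ℝ)..t, f τ) Filter.atTop (nhds A)) :
    Filter.Tendsto f Filter.atTop (nhds 0) := by
  have hc : ContinuousOn f (Set.Ici 0) := hf.continuousOn
  have hInt : ∀ a b : ℝ, 0 ≤ a → a ≤ b →
      IntervalIntegrable f MeasureTheory.volume a b := by
    intro a b ha hab
    apply ContinuousOn.intervalIntegrable
    apply hc.mono
    rw [Set.uIcc_of_le hab]
    intro x hx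
    exact le_trans ha hx.1
  rw [Metric.tendsto_atTop]
  intro ε hε
  by_contra hcon
  push_neg at hcon
  obtain ⟨δ, hδ, hδ'⟩ := (Metric.uniformContinuousOn_iff.mp hf) (ε/2) (by linarith)
  set c : ℝ := (ε/2) * (δ/2) with hc_def
  have hcpos : 0 < c := by positivity
  obtain ⟨N, hN⟩ := (Metric.tendsto_atTop.mp hint) (c/2) (by linarith)
  obtain ⟨t₀, ht₀, hft₀⟩ := hcon (max N 0)
  have ht₀N : N ≤ t₀ := le_trans (le_max_left _ _) ht₀
  have ht₀0 : (0:ℝ) ≤ t₀ := le_trans (le_max_right _ _) ht₀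
  have hfabs : ε ≤ |f t₀| := by simpa [Real.dist_eq] using hft₀
  set b : ℝ := t₀ + δ/2 with hb_def
  have htb : t₀ ≤ b := by simp [hb_def]; linarith
  have hb0 : (0:ℝ) ≤ b := le_trans ht₀0 htb
  have hbN : N ≤ b := le_trans ht₀N htb
  have hI1 : IntervalIntegrable f MeasureTheory.volume 0 t₀ := hInt 0 t₀ le_rfl ht₀0
  have hI2 : IntervalIntegrable f MeasureTheory.volume 0 b := hInt 0 b le_rfl hb0
  have hI3 : IntervalIntegrable f MeasureTheory.volume t₀ b := hInt t₀ b ht₀0 htb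
  have hsub : (∫ τ in (0:ℝ)..b, f τ) - (∫ τ in (0:ℝ)..t₀, f τ) = ∫ τ in t₀..b, f τ :=
    intervalIntegral.integral_interval_sub_left hI2 hI1
  have hsmall : |∫ τ in t₀..b, f τ| < c := by
    rw [← hsub]
    have h1 := hN b hbN
    have h2 := hN t₀ ht₀N
    rw [Real.dist_eq] at h1 h2
    calc |(∫ τ in (0:ℝ)..b, f τ) - (∫ τ in (0:ℝ)..t₀, f τ)|
        ≤ |(∫ τ in (0:ℝ)..b, f τ) - A| + |A - (∫ τ in (0:ℝ)..t₀, f τ)| := abs_sub_le _ _ _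
      _ = |(∫ τ in (0:ℝ)..b, f τ) - A| + |(∫ τ in (0:ℝ)..t₀, f τ) - A| := by
          rw [abs_sub_comm A]
      _ < c/2 + c/2 := add_lt_add h1 h2
      _ = c := by ring
  have hclose : ∀ s ∈ Set.Icc t₀ b, |f s - f t₀| < ε/2 := by
    intro s hs
    apply hδ' s (le_trans ht₀0 hs.1) t₀ ht₀0
    rw [Real.dist_eq, abs_sub_lt_iff]
    constructor
    · have := hs.2; simp [hb_def] at this; linarith
    · have := hs.1; linarith
  -- case split on the sign of f t₀
  rcases le_or_gt ε (f t₀) with hpos | hneg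
  · -- f t₀ ≥ ε, so f s > ε/2 on [t₀, b]
    have hlow : ∀ s ∈ Set.Icc t₀ b, (ε/2 : ℝ) ≤ f s := by
      intro s hs
      have := hclose s hs
      rw [abs_sub_lt_iff] at this
      linarith [this.2]
    have hmono : (∫ τ in t₀..b, (ε/2 : ℝ)) ≤ ∫ τ in t₀..b, f τ :=
      intervalIntegral.integral_mono_on htb (intervalIntegrable_const) hI3 hlow
    rw [intervalIntegral.integral_const] at hmono
    have : c ≤ ∫ τ in t₀..b, f τ := by
      have hbb : b - t₀ = δ/2 := by simp [hb_def]
      rw [hbb] at hmono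
      simp [smul_eq_mul] at hmono
      rw [hc_def]; linarith
    have := le_trans this (le_abs_self _)
    linarith
  · -- f t₀ ≤ -ε
    have hneg' : f t₀ ≤ -ε := by
      cases' abs_cases (f t₀) with h h
      · linarith [hfabs, h.1]
      · linarith [hfabs, h.1]
    have hhigh : ∀ s ∈ Set.Icc t₀ b, f s ≤ -(ε/2) := by
      intro s hs
      have := hclose s hs
      rw [abs_sub_lt_iff] at this
      linarith [this.1]
    have hmono : (∫ τ in t₀..b, f τ) ≤ ∫ τ in t₀..b, (-(ε/2) : ℝ) :=
      intervalIntegral.integral_mono_on htb hI3 (intervalIntegrable_const) hhigh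
    rw [intervalIntegral.integral_const] at hmono
    have : (∫ τ in t₀..b, f τ) ≤ -c := by
      have hbb : b - t₀ = δ/2 := by simp [hb_def]
      rw [hbb] at hmono
      simp [smul_eq_mul] at hmono
      rw [hc_def]; linarith
    have := le_trans (neg_le_neg this) (neg_le_abs _)
    simp at this
    linarith
end

section
/- Let β ≥ 0, ε > 0, P symmetric, Bⁱ a matrix, x̂ ∈ ℝ^n, and define ωⁱ = (Bⁱ)ᵀ P x̂ and h_ε as the boundary-layer function (h_ε(ω) = ω/‖ω‖ if β‖ω‖ > ε, (β/ε)ω otherwise). Then −x̂ᵀ P Bⁱ β h_ε(ωⁱ) ≤ −β‖x̂ᵀ P Bⁱ‖ + ε/4. -/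
open Matrix

/-- Inequality (41): the boundary-layered sliding-mode term driven by the
estimate `x̂`, with `ωⁱ = (Bⁱ)ᵀPx̂`, satisfies
`−x̂ᵀ P Bⁱ β h_ε(ωⁱ) ≤ −β‖x̂ᵀPBⁱ‖ + ε/4`. -/
theorem stmt_18 {n b : ℕ} (β ε : ℝ) (hβ : 0 ≤ β) (hε : 0 < ε)
    (P : Matrix (Fin n) (Fin n) ℝ) (hP : P.IsSymm)
    (Bi : Matrix (Fin n) (Fin b) ℝ) (xhat : Fin n → ℝ)
    (heps : (Fin b → ℝ) → (Fin b → ℝ))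
    (hh : ∀ w : Fin b → ℝ, heps w =
      if ε < β * Real.sqrt (∑ j, w j ^ 2)
      then (Real.sqrt (∑ j, w j ^ 2))⁻¹ • w
      else (β / ε) • w)
    (ω : Fin b → ℝ) (hω : ω = (Biᵀ * P).mulVec xhat) :
    -(Matrix.vecMul xhat (P * Bi) ⬝ᵥ (β • heps ω))
      ≤ -(β * Real.sqrt (∑ j, (Matrix.vecMul xhat (P * Bi)) j ^ 2)) + ε / 4 := by
  have hvm : Matrix.vecMul xhat (P * Bi) = ω := by
    rw [hω, ← Matrix.mulVec_transpose, Matrix.transpose_mul, hP.eq]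
  rw [hvm, hh ω]
  set s := Real.sqrt (∑ j, ω j ^ 2) with hs
  have hs0 : 0 ≤ s := Real.sqrt_nonneg _
  have hsq : s ^ 2 = ∑ j, ω j ^ 2 :=
    Real.sq_sqrt (Finset.sum_nonneg fun j _ => sq_nonneg _)
  have hdot : ∀ c : ℝ, ω ⬝ᵥ (β • c • ω) = β * c * ∑ j, ω j ^ 2 := by
    intro c
    simp [dotProduct, Finset.mul_sum, pow_two]
    ring_nf
    congr 1; funext j; ring
  split_ifs with h
  · have hspos : 0 < s := by
      rcases hs0.lt_or_eq with h' | h'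
      · exact h'
      · exfalso; rw [← h'] at h; simp at h; linarith
    rw [hdot]
    have : β * s⁻¹ * ∑ j, ω j ^ 2 = β * s := by
      rw [← hsq]; field_simp
    rw [this]; linarith
  · rw [hdot]
    push_neg at h
    have hle : β * s ≤ ε := h
    have key : β * s - ε / 4 ≤ β * (β / ε) * s ^ 2 := by
      have h1 : 0 ≤ (β * s - ε / 2) ^ 2 := sq_nonneg _
      have : β * s - ε / 4 ≤ β ^ 2 * s ^ 2 / ε := by
        rw [le_div_iff₀ hε]; nlinarith
      calc β * s - ε / 4 ≤ β ^ 2 * s ^ 2 / ε := this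
        _ = β * (β / ε) * s ^ 2 := by ring
    rw [← hsq]
    linarith
end
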